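/- (Lemma: bottom-row bideterminants of path products are unipotent invariants for the equioriented framed A-type quiver.) Let n, m ≥ 1 and r ≥ 0. For unipotent upper triangular n×n complex matrices u_1, …, u_{r+1}, an n×m complex matrix A_0, and upper triangular n×n complex matrices A_1, …, A_r, set A_0' = u_1 A_0 and A_α' = u_{α+1} A_α u_α^{−1} for 1 ≤ α ≤ r (this is the action of 𝕌_β = U_n^{r+1} on F•Rep(Q,β) = M_{n×m}(ℂ) ⊕ 𝔟_n^{⊕r}). Then for every 0 ≤ l ≤ r, every 1 ≤ p ≤ n with n−p+1 ≤ m, and all column indices 1 ≤ i_1 < ⋯ < i_{n−p+1} ≤ m, one has (p p+1 ⋯ n | i_1 ⋯ i_{n−p+1})_{A_l' A_{l−1}' ⋯ A_1' A_0'} = (p p+1 ⋯ n | i_1 ⋯ i_{n−p+1})_{A_l A_{l−1} ⋯ A_1 A_0}; that is, these bideterminants are 𝕌_β-invariant polynomial functions. -/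
import Mathlib


/-- `M` is an upper triangular complex matrix. -/
def IsUT {n : ℕ} (M : Matrix (Fin n) (Fin n) ℂ) : Prop :=
  ∀ i j : Fin n, j < i → M i j = 0

/-- `M` is a unipotent upper triangular complex matrix. -/
def IsUnipUT {n : ℕ} (M : Matrix (Fin n) (Fin n) ℂ) : Prop :=
  IsUT M ∧ ∀ i : Fin n, M i i = 1

/-- The (0-indexed) window of rows `p, p+1, …, n` (1-indexed), viewed as an embedding
`Fin (n - p + 1) → Fin n`, `k ↦ (p - 1) + k`. -/
def rowWindow (n p : ℕ) (hp : 1 ≤ p) (hpn : p ≤ n) (k : Fin (n - p + 1)) : Fin n :=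
  ⟨p - 1 + k.val, by have hk := k.isLt; omega⟩

/-- The path product `A_l ⋯ A_1 A_0` of general representations along the equioriented
framed `A`-type quiver `1' → 1 → 2 → ⋯ → r+1`. -/
noncomputable def pathProd {n m : ℕ} (A0 : Matrix (Fin n) (Fin m) ℂ)
    (A : ℕ → Matrix (Fin n) (Fin n) ℂ) : ℕ → Matrix (Fin n) (Fin m) ℂ
  | 0 => A0
  | l + 1 => A (l + 1) * pathProd A0 A l

/-- Bottom-row bideterminants of the path products `A_l A_{l-1} ⋯ A_1 A_0` are
invariant under the action of `𝕌_β = Uₙ^{r+1}` on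
`F•Rep(Q,β) = M_{n×m}(ℂ) ⊕ 𝔟ₙ^{⊕r}`, where the action transforms `A_0 ↦ u_1 A_0` and
`A_α ↦ u_{α+1} A_α u_α⁻¹` for `1 ≤ α ≤ r`. -/

lemma IsUnipUT.det_eq_one {n : ℕ} {M : Matrix (Fin n) (Fin n) ℂ} (h : IsUnipUT M) :
    M.det = 1 := by
  have hbt : M.BlockTriangular id := fun i j hij => h.1 i j hij
  rw [Matrix.det_of_upperTriangular hbt]
  simp [h.2]

lemma IsUnipUT.inv_mul_self {n : ℕ} {M : Matrix (Fin n) (Fin n) ℂ} (h : IsUnipUT M) :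
    M⁻¹ * M = 1 :=
  Matrix.nonsing_inv_mul _ (by rw [h.det_eq_one]; exact isUnit_one)

lemma pathProd_telescope {n m r : ℕ}
    (u : ℕ → Matrix (Fin n) (Fin n) ℂ)
    (hu : ∀ v, 1 ≤ v → v ≤ r + 1 → IsUnipUT (u v))
    (A0 : Matrix (Fin n) (Fin m) ℂ)
    (A : ℕ → Matrix (Fin n) (Fin n) ℂ)
    (l : ℕ) (hl : l ≤ r) :
    pathProd (u 1 * A0) (fun α => u (α + 1) * A α * (u α)⁻¹) l
      = u (l + 1) * pathProd A0 A l := by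
  induction l with
  | zero => rfl
  | succ l ih =>
    have hl' : l ≤ r := Nat.le_of_succ_le hl
    show (u (l + 2) * A (l + 1) * (u (l + 1))⁻¹)
        * pathProd (u 1 * A0) (fun α => u (α + 1) * A α * (u α)⁻¹) l = _
    rw [ih hl']
    have hinv : (u (l + 1))⁻¹ * u (l + 1) = 1 :=
      (hu (l + 1) (Nat.le_add_left 1 l) (by omega)).inv_mul_self
    calc (u (l + 2) * A (l + 1) * (u (l + 1))⁻¹) * (u (l + 1) * pathProd A0 A l)
        = u (l + 2) * A (l + 1) * ((u (l + 1))⁻¹ * u (l + 1)) * pathProd A0 A l := by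
          simp only [Matrix.mul_assoc]
      _ = u (l + 2) * (A (l + 1) * pathProd A0 A l) := by
          rw [hinv, Matrix.mul_one, Matrix.mul_assoc]
      _ = _ := rfl

lemma rowWindow_injective (n p : ℕ) (hp : 1 ≤ p) (hpn : p ≤ n) :
    Function.Injective (rowWindow n p hp hpn) := by
  intro a b hab
  have : p - 1 + a.val = p - 1 + b.val := congrArg Fin.val hab
  exact Fin.ext (by omega)

lemma det_submatrix_unip_mul {n m p : ℕ} (hp1 : 1 ≤ p) (hpn : p ≤ n)
    {u : Matrix (Fin n) (Fin n) ℂ} (hu : IsUnipUT u)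
    (M : Matrix (Fin n) (Fin m) ℂ) (cols : Fin (n - p + 1) → Fin m) :
    ((u * M).submatrix (rowWindow n p hp1 hpn) cols).det
      = (M.submatrix (rowWindow n p hp1 hpn) cols).det := by
  set rw' := rowWindow n p hp1 hpn with hrw
  have key : (u * M).submatrix rw' cols
      = u.submatrix rw' rw' * M.submatrix rw' cols := by
    ext k j
    simp only [Matrix.submatrix_apply, Matrix.mul_apply]
    symm
    have hinj : ∀ x ∈ Finset.univ, ∀ y ∈ Finset.univ, rw' x = rw' y → x = y :=
      fun x _ y _ h => rowWindow_injective n p hp1 hpn h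
    rw [← Finset.sum_image (f := fun t => u (rw' k) t * M t (cols j)) hinj]
    apply Finset.sum_subset (Finset.subset_univ _)
    intro t _ ht
    have htlt : t.val < p - 1 := by
      by_contra hge
      push_neg at hge
      apply ht
      have htn := t.isLt
      refine Finset.mem_image.mpr ⟨⟨t.val - (p - 1), by omega⟩, Finset.mem_univ _, ?_⟩
      exact Fin.ext (by simp [hrw, rowWindow]; omega)
    have : u (rw' k) t = 0 := by
      apply hu.1
      show t.val < (rw' k).val
      simp only [hrw, rowWindow]
      omega
    simp [this]
  rw [key, Matrix.det_mul]
  have huw : IsUnipUT (u.submatrix rw' rw') := by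
    constructor
    · intro i j hij
      apply hu.1
      show (rw' j).val < (rw' i).val
      simp only [hrw, rowWindow]
      exact Nat.add_lt_add_left hij _
    · intro i
      exact hu.2 _
  rw [huw.det_eq_one, one_mul]

theorem bideterminant_pathProd_unipotent_invariant
    (n m r : ℕ) (hn : 1 ≤ n) (hm : 1 ≤ m)
    (u : ℕ → Matrix (Fin n) (Fin n) ℂ)
    (hu : ∀ v, 1 ≤ v → v ≤ r + 1 → IsUnipUT (u v))
    (A0 : Matrix (Fin n) (Fin m) ℂ)
    (A : ℕ → Matrix (Fin n) (Fin n) ℂ)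
    (hA : ∀ α, 1 ≤ α → α ≤ r → IsUT (A α))
    (l : ℕ) (hl : l ≤ r)
    (p : ℕ) (hp1 : 1 ≤ p) (hpn : p ≤ n) (hpm : n - p + 1 ≤ m)
    (cols : Fin (n - p + 1) → Fin m) (hcols : StrictMono cols) :
    Matrix.det
        ((pathProd (u 1 * A0) (fun α => u (α + 1) * A α * (u α)⁻¹) l).submatrix
          (rowWindow n p hp1 hpn) cols) =
      Matrix.det ((pathProd A0 A l).submatrix (rowWindow n p hp1 hpn) cols) := by
  rw [pathProd_telescope u hu A0 A l hl]
  exact det_submatrix_unip_mul hp1 hpn (hu (l + 1) (Nat.le_add_left 1 l) (by omega)) _ cols
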